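/- There exist a constant C > 0 and K₀ > 1 such that for all K ≥ K₀: | u⁰_{n*(K)} − 1/(1 − μ₁/λ₁) | ≤ C/K, where u⁰_n = 1 + ∑_{j=1}^{n−1} 1/(λ_j·π_j), and μ₁/λ₁ = μ̃(1/K)/λ̃(1/K). -/

import Mathlib

open Filter MeasureTheory

noncomputable section

/-- Birth rate `λ_n = n · λ̃(n/K)`. -/
def lamK (lam : ℝ → ℝ) (K : ℝ) (n : ℕ) : ℝ := (n : ℝ) * lam ((n : ℝ) / K)

/-- Death rate `μ_n = n · μ̃(n/K)`. -/
def muK (mu : ℝ → ℝ) (K : ℝ) (n : ℕ) : ℝ := (n : ℝ) * mu ((n : ℝ) / K)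

/-- The weights `π_n = (λ₁⋯λ_{n-1})/(μ₁⋯μ_n)` (so `π₁ = 1/μ₁`). -/
def pik (lam mu : ℝ → ℝ) (K : ℝ) (n : ℕ) : ℝ :=
  (∏ j ∈ Finset.Icc 1 (n - 1), lamK lam K j) / (∏ j ∈ Finset.Icc 1 n, muK mu K j)

/-- `H(x) = ∫_{x*}^x log (μ̃(s)/λ̃(s)) ds`. -/
def Hfun (lam mu : ℝ → ℝ) (xs : ℝ) (x : ℝ) : ℝ :=
  ∫ s in xs..x, Real.log (mu s / lam s)

/-- `u⁰_n = 1 + ∑_{j=1}^{n-1} 1/(λ_j π_j)`. -/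
def u0 (lam mu : ℝ → ℝ) (K : ℝ) (n : ℕ) : ℝ :=
  1 + ∑ j ∈ Finset.Icc 1 (n - 1), 1 / (lamK lam K j * pik lam mu K j)

/-- Standing assumptions on the rate functions. -/
structure SA (lam mu : ℝ → ℝ) (xs : ℝ) : Prop where
  lam_pos : ∀ x : ℝ, 0 ≤ x → 0 < lam x
  mu_pos : ∀ x : ℝ, 0 ≤ x → 0 < mu x
  lam_diff : DifferentiableOn ℝ lam (Set.Ici (0 : ℝ))
  mu_diff : DifferentiableOn ℝ mu (Set.Ici (0 : ℝ))
  lam_mono : MonotoneOn lam (Set.Ici (0 : ℝ))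
  mu_mono : MonotoneOn mu (Set.Ici (0 : ℝ))
  ratio_lim : Tendsto (fun x : ℝ => lam x / mu x) atTop (nhds 0)
  mu0_pos : 0 < mu 0
  mu0_lt_lam0 : mu 0 < lam 0
  xs_pos : 0 < xs
  lam_eq_mu_xs : lam xs = mu xs
  xs_unique : ∀ x : ℝ, 0 < x → lam x = mu x → x = xs
  mu_logderiv_bdd : ∃ M : ℝ, ∀ x : ℝ, 0 ≤ x → deriv mu x / mu x ≤ M
  logratio_mono : MonotoneOn (fun x : ℝ => Real.log (mu x / lam x)) (Set.Ici (0 : ℝ))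
  H_d1 : ∀ x : ℝ, 0 ≤ x → DifferentiableAt ℝ (Hfun lam mu xs) x
  H_d2 : ∀ x : ℝ, 0 ≤ x → DifferentiableAt ℝ (deriv (Hfun lam mu xs)) x
  H_d3 : ∀ x : ℝ, 0 ≤ x → DifferentiableAt ℝ (deriv (deriv (Hfun lam mu xs))) x
  H3_bdd : ∃ M : ℝ, ∀ x : ℝ, 0 ≤ x →
    (1 + x ^ 2) * |deriv (deriv (deriv (Hfun lam mu xs))) x| ≤ M


lemma geom_aux {q : ℝ} (h0 : 0 ≤ q) (h1 : q < 1) (n : ℕ) :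
    (n + 1 : ℝ) * q ^ n ≤ 1 / (1 - q) := by
  have h2 : ∑ k ∈ Finset.range (n+1), q ^ n ≤ ∑ k ∈ Finset.range (n+1), q ^ k := by
    apply Finset.sum_le_sum
    intro k hk
    exact pow_le_pow_of_le_one h0 h1.le (Nat.lt_succ_iff.mp (Finset.mem_range.mp hk))
  rw [Finset.sum_const, Finset.card_range, nsmul_eq_mul] at h2
  have h3 : ∑ k ∈ Finset.range (n+1), q ^ k = (1 - q ^ (n+1))/(1 - q) := by
    rw [geom_sum_eq h1.ne, div_eq_div_iff (by linarith) (by linarith)]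
    ring
  have h4 : (1 - q ^ (n+1))/(1 - q) ≤ 1/(1-q) := by
    have hq : 0 < 1 - q := by linarith
    have : (0:ℝ) ≤ q ^ (n+1) := pow_nonneg h0 _
    gcongr
    linarith
  push_cast at h2
  linarith [h3 ▸ h2]

lemma sum_geom_le {q : ℝ} (h0 : 0 ≤ q) (h1 : q < 1) (k : ℕ) :
    ∑ i ∈ Finset.range k, q ^ i ≤ 1 / (1 - q) := by
  have h3 : ∑ i ∈ Finset.range k, q ^ i = (1 - q ^ k)/(1 - q) := by
    rw [geom_sum_eq h1.ne, div_eq_div_iff (by linarith) (by linarith)]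
    ring
  rw [h3]
  have hq : 0 < 1 - q := by linarith
  have : (0:ℝ) ≤ q ^ k := pow_nonneg h0 _
  gcongr
  linarith

lemma prod_sub_pow_le (a : ℕ → ℝ) (b t : ℝ) (hb : 0 ≤ b) (hbt : b ≤ t) (ht1 : t ≤ 1) :
    ∀ j : ℕ, (∀ i ∈ Finset.Icc 1 j, b ≤ a i ∧ a i ≤ t) →
      (∏ i ∈ Finset.Icc 1 j, a i) - b ^ j ≤ t ^ (j-1) * ∑ i ∈ Finset.Icc 1 j, (a i - b) := by
  intro j
  induction j with
  | zero => intro _; simp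
  | succ j ih =>
    intro h
    have hmem : ∀ i ∈ Finset.Icc 1 j, b ≤ a i ∧ a i ≤ t := by
      intro i hi
      apply h
      simp only [Finset.mem_Icc] at hi ⊢
      omega
    have ih' := ih hmem
    have haj := h (j+1) (by simp)
    rw [Finset.prod_Icc_succ_top (by omega : 1 ≤ j + 1),
        Finset.sum_Icc_succ_top (by omega : 1 ≤ j + 1)]
    have ht0 : 0 ≤ t := le_trans hb hbt
    have hP0 : 0 ≤ ∏ i ∈ Finset.Icc 1 j, a i :=
      Finset.prod_nonneg (fun i hi => le_trans hb (hmem i hi).1)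
    have hbj : b ^ j ≤ ∏ i ∈ Finset.Icc 1 j, a i := by
      calc b ^ j = ∏ i ∈ Finset.Icc 1 j, b := by
            rw [Finset.prod_const, Nat.card_Icc]; norm_num
        _ ≤ _ := Finset.prod_le_prod (fun _ _ => hb) (fun i hi => (hmem i hi).1)
    have hE0 : 0 ≤ ∑ i ∈ Finset.Icc 1 j, (a i - b) :=
      Finset.sum_nonneg (fun i hi => by linarith [(hmem i hi).1])
    have htj : t * t ^ (j - 1) ≤ t ^ j := by
      rcases Nat.eq_zero_or_pos j with hj | hj
      · subst hj; simpa using ht1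
      · rw [← pow_succ']
        apply pow_le_pow_of_le_one ht0 ht1
        omega
    have htjj : (t:ℝ) ^ j = t ^ (j + 1 - 1) := by norm_num
    calc (∏ i ∈ Finset.Icc 1 j, a i) * a (j+1) - b ^ (j+1)
        = a (j+1) * ((∏ i ∈ Finset.Icc 1 j, a i) - b ^ j) + (a (j+1) - b) * b ^ j := by
          ring
      _ ≤ t * (t ^ (j-1) * ∑ i ∈ Finset.Icc 1 j, (a i - b)) + (a (j+1) - b) * t ^ j := by
          have hD0 : 0 ≤ (∏ i ∈ Finset.Icc 1 j, a i) - b ^ j := by linarith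
          have h1 : a (j+1) * ((∏ i ∈ Finset.Icc 1 j, a i) - b ^ j) ≤
              t * (t ^ (j-1) * ∑ i ∈ Finset.Icc 1 j, (a i - b)) :=
            calc a (j+1) * ((∏ i ∈ Finset.Icc 1 j, a i) - b ^ j) ≤
                t * ((∏ i ∈ Finset.Icc 1 j, a i) - b ^ j) :=
                  mul_le_mul_of_nonneg_right haj.2 hD0
              _ ≤ _ := mul_le_mul_of_nonneg_left ih' ht0
          have h2 : (a (j+1) - b) * b ^ j ≤ (a (j+1) - b) * t ^ j :=
            mul_le_mul_of_nonneg_left (pow_le_pow_left₀ hb hbt j) (by linarith [haj.1])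
          linarith
      _ ≤ t ^ (j + 1 - 1) * (∑ i ∈ Finset.Icc 1 j, (a i - b) + (a (j+1) - b)) := by
          have h1 : t * (t ^ (j-1) * ∑ i ∈ Finset.Icc 1 j, (a i - b)) ≤
              t ^ (j+1-1) * ∑ i ∈ Finset.Icc 1 j, (a i - b) := by
            rw [← mul_assoc, ← htjj]
            exact mul_le_mul_of_nonneg_right htj hE0
          have h2 : (a (j+1) - b) * t ^ j ≤ t ^ (j+1-1) * (a (j+1) - b) := by
            rw [← htjj, mul_comm]
          rw [mul_add]
          linarith

lemma log_mu_lip (mu : ℝ → ℝ) (hmu_pos : ∀ x : ℝ, 0 ≤ x → 0 < mu x)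
    (hmu_diff : DifferentiableOn ℝ mu (Set.Ici (0:ℝ)))
    (M : ℝ) (hM : ∀ x : ℝ, 0 ≤ x → deriv mu x / mu x ≤ M)
    (a b : ℝ) (ha : 0 < a) (hab : a < b) :
    Real.log (mu b) - Real.log (mu a) ≤ M * (b - a) := by
  have hcont : ContinuousOn (fun x => Real.log (mu x)) (Set.Icc a b) := by
    apply ContinuousOn.log
    · exact (hmu_diff.continuousOn).mono (fun x hx => le_trans ha.le hx.1)
    · intro x hx
      exact (hmu_pos x (le_trans ha.le hx.1)).ne'
  have hderiv : ∀ x ∈ Set.Ioo a b, HasDerivAt (fun x => Real.log (mu x)) (deriv mu x / mu x) x := by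
    intro x hx
    have hx0 : 0 < x := lt_trans ha hx.1
    have hdm : DifferentiableAt ℝ mu x :=
      hmu_diff.differentiableAt (Ici_mem_nhds hx0)
    exact hdm.hasDerivAt.log (hmu_pos x hx0.le).ne'
  obtain ⟨c, hc, hc'⟩ := exists_hasDerivAt_eq_slope (fun x => Real.log (mu x)) _ hab hcont hderiv
  have h1 : Real.log (mu b) - Real.log (mu a) = (deriv mu c / mu c) * (b - a) := by
    rw [hc', div_mul_cancel₀ _ (by linarith : b - a ≠ 0)]
  rw [h1]
  exact mul_le_mul_of_nonneg_right (hM c (le_trans ha.le (le_of_lt hc.1))) (by linarith)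

lemma exp_sub_one_le_aux {d : ℝ} (hd : 0 ≤ d) : Real.exp d - 1 ≤ d * Real.exp d := by
  have hmulinv : Real.exp (-d) * Real.exp d = 1 := by
    rw [← Real.exp_add]; simp
  nlinarith [Real.add_one_le_exp (-d), Real.exp_pos d]

set_option maxHeartbeats 1000000 in
/-- `u⁰_{n*(K)} = 1/(1 - μ₁/λ₁) + O(1/K)`. -/
theorem stmt_18 (lam mu : ℝ → ℝ) (xs : ℝ) (hSA : SA lam mu xs) :
    ∃ C : ℝ, 0 < C ∧ ∃ K₀ : ℝ, 1 < K₀ ∧ ∀ K : ℝ, K₀ ≤ K →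
      |u0 lam mu K (Nat.floor (xs * K)) - 1 / (1 - muK mu K 1 / lamK lam K 1)| ≤ C / K := by
  classical
  obtain ⟨M₀, hM₀'⟩ := hSA.mu_logderiv_bdd
  set M : ℝ := max M₀ 0 with hMdef
  have hM0 : 0 ≤ M := le_max_right _ _
  have hM₀ : ∀ x : ℝ, 0 ≤ x → deriv mu x / mu x ≤ M :=
    fun x hx => (hM₀' x hx).trans (le_max_left _ _)
  have hxs := hSA.xs_pos
  have hρpos : ∀ x : ℝ, 0 ≤ x → 0 < mu x / lam x :=
    fun x hx => div_pos (hSA.mu_pos x hx) (hSA.lam_pos x hx)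
  have hρmono : ∀ a b : ℝ, 0 ≤ a → a ≤ b → mu a / lam a ≤ mu b / lam b := by
    intro a b ha hab
    have h := hSA.logratio_mono (Set.mem_Ici.2 ha) (Set.mem_Ici.2 (ha.trans hab)) hab
    have h2 := Real.exp_le_exp.2 h
    rwa [Real.exp_log (hρpos a ha), Real.exp_log (hρpos b (ha.trans hab))] at h2
  have hρxs : mu xs / lam xs = 1 := by
    rw [← hSA.lam_eq_mu_xs, div_self (hSA.lam_pos xs hxs.le).ne']
  have hρle1 : ∀ x : ℝ, 0 ≤ x → x ≤ xs → mu x / lam x ≤ 1 :=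
    fun x hx hxxs => (hρmono x xs hx hxxs).trans_eq hρxs
  set Q : ℝ := mu (xs/2) / lam (xs/2) with hQdef
  have hxs2 : (0:ℝ) < xs/2 := by linarith
  have hQpos : 0 < Q := hρpos _ hxs2.le
  have hQlt1 : Q < 1 := by
    rcases lt_or_eq_of_le (hρle1 (xs/2) hxs2.le (by linarith)) with h | h
    · exact h
    · exfalso
      have hmueq : lam (xs/2) = mu (xs/2) := by
        have := (div_eq_one_iff_eq (hSA.lam_pos _ hxs2.le).ne').1 h
        exact this.symm
      have := hSA.xs_unique (xs/2) hxs2 hmueq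
      linarith
  set θ : ℝ := Real.sqrt Q with hθdef
  set φ : ℝ := Real.sqrt θ with hφdef
  have hθ0 : 0 ≤ θ := Real.sqrt_nonneg _
  have hφ0 : 0 ≤ φ := Real.sqrt_nonneg _
  have hθθ : θ * θ = Q := Real.mul_self_sqrt hQpos.le
  have hφφ : φ * φ = θ := Real.mul_self_sqrt hθ0
  have hθ1 : θ < 1 := by nlinarith
  have hφ1 : φ < 1 := by nlinarith
  have hQ1' : 0 < 1 - Q := by linarith
  have hθ1' : 0 < 1 - θ := by linarith
  have hφ1' : 0 < 1 - φ := by linarith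
  have hinvQ : (0:ℝ) ≤ 1/(1-Q) := div_nonneg zero_le_one hQ1'.le
  have hinvθ : (0:ℝ) ≤ 1/(1-θ) := div_nonneg zero_le_one hθ1'.le
  have hinvφ : (0:ℝ) ≤ 1/(1-φ) := div_nonneg zero_le_one hφ1'.le
  set C₁ : ℝ := M * Real.exp (M * xs) with hC₁def
  have hC₁0 : 0 ≤ C₁ := mul_nonneg hM0 (Real.exp_pos _).le
  set Ca : ℝ := C₁ * (1/(1-φ))^2 * (1/(1-θ)) with hCa
  set Cb : ℝ := (4/xs) * (1/(1-φ))^2 with hCb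
  set Cc : ℝ := (2/xs) * (1/(1-θ)) * (1/(1-Q)) with hCc
  have hCa0 : 0 ≤ Ca := mul_nonneg (mul_nonneg hC₁0 (sq_nonneg _)) hinvθ
  have hCb0 : 0 ≤ Cb := mul_nonneg (by positivity) (sq_nonneg _)
  have hCc0 : 0 ≤ Cc := mul_nonneg (mul_nonneg (by positivity) hinvθ) hinvQ
  refine ⟨Ca + Cb + Cc + 1, by linarith, max 2 (4/xs),
    lt_of_lt_of_le one_lt_two (le_max_left _ _), ?_⟩
  intro K hK
  have hK2 : (2:ℝ) ≤ K := le_trans (le_max_left _ _) hK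
  have hKpos : (0:ℝ) < K := by linarith
  have hK4 : 4/xs ≤ K := le_trans (le_max_right _ _) hK
  have hxsK4 : (4:ℝ) ≤ xs * K := by
    rw [div_le_iff₀ hxs] at hK4
    linarith
  set n := Nat.floor (xs * K) with hn
  set m := Nat.floor (xs * K / 2) with hm
  have hn4 : 4 ≤ n := Nat.le_floor (by exact_mod_cast hxsK4)
  have hm2 : 2 ≤ m := Nat.le_floor (by push_cast; linarith)
  have hnle : (n:ℝ) ≤ xs * K := Nat.floor_le (by positivity)
  have hmle : (m:ℝ) ≤ xs * K / 2 := Nat.floor_le (by positivity)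
  have hnlt : xs * K < n + 1 := Nat.lt_floor_add_one _
  have hmlt : xs * K / 2 < m + 1 := Nat.lt_floor_add_one _
  have hmn : m + 1 ≤ n := by
    have h1 : (m:ℝ) < (n:ℝ) := by linarith
    have h2 : m < n := by exact_mod_cast h1
    omega
  have hKinv : (0:ℝ) < 1/K := by positivity
  have h1Kxs2 : 1/K ≤ xs/2 := by
    rw [div_le_div_iff₀ hKpos (by norm_num : (0:ℝ) < 2)]
    linarith
  set r1 : ℝ := mu (1/K) / lam (1/K) with hr1def
  have hr1pos : 0 < r1 := hρpos _ hKinv.le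
  have hr1Q : r1 ≤ Q := hρmono _ _ hKinv.le h1Kxs2
  have hr1lt1 : r1 < 1 := lt_of_le_of_lt hr1Q hQlt1
  have hr1ne : r1 ≠ 1 := ne_of_lt hr1lt1
  have h1r1 : 0 < 1 - r1 := by linarith
  have hmuK1 : muK mu K 1 / lamK lam K 1 = r1 := by
    simp [muK, lamK, hr1def]
  have hidx : ∀ i : ℕ, 0 ≤ (i:ℝ)/K := fun i => by positivity
  set P : ℕ → ℝ := fun j => ∏ i ∈ Finset.Icc 1 j, (mu ((i:ℝ)/K) / lam ((i:ℝ)/K)) with hPdef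
  have hPapp : ∀ j : ℕ, P j = ∏ i ∈ Finset.Icc 1 j, (mu ((i:ℝ)/K) / lam ((i:ℝ)/K)) :=
    fun j => rfl
  -- the identity 1/(λⱼπⱼ) = P j
  have hPid : ∀ j : ℕ, 1 ≤ j → 1 / (lamK lam K j * pik lam mu K j) = P j := by
    intro j hj
    have hlampos : ∀ i ∈ Finset.Icc 1 j, 0 < lamK lam K i := by
      intro i hi
      have h1 : 1 ≤ i := (Finset.mem_Icc.1 hi).1
      exact mul_pos (by exact_mod_cast Nat.pos_of_ne_zero (by omega)) (hSA.lam_pos _ (hidx i))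
    have hmupos : ∀ i ∈ Finset.Icc 1 j, 0 < muK mu K i := by
      intro i hi
      have h1 : 1 ≤ i := (Finset.mem_Icc.1 hi).1
      exact mul_pos (by exact_mod_cast Nat.pos_of_ne_zero (by omega)) (hSA.mu_pos _ (hidx i))
    have hstep : (∏ i ∈ Finset.Icc 1 j, lamK lam K i) =
        (∏ i ∈ Finset.Icc 1 (j-1), lamK lam K i) * lamK lam K j := by
      have h := Finset.prod_Icc_succ_top (f := lamK lam K) (by omega : 1 ≤ (j-1)+1)
      rw [show j - 1 + 1 = j from by omega] at h
      exact h
    have hratio : (∏ i ∈ Finset.Icc 1 j, muK mu K i) / (∏ i ∈ Finset.Icc 1 j, lamK lam K i)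
        = ∏ i ∈ Finset.Icc 1 j, (mu ((i:ℝ)/K) / lam ((i:ℝ)/K)) := by
      rw [← Finset.prod_div_distrib]
      apply Finset.prod_congr rfl
      intro i hi
      have h1 : 1 ≤ i := (Finset.mem_Icc.1 hi).1
      have hi0 : ((i:ℝ)) ≠ 0 := Nat.cast_ne_zero.2 (by omega)
      rw [muK, lamK, mul_div_mul_left _ _ hi0]
    rw [hPapp j, pik, ← hratio]
    rw [mul_div_assoc', mul_comm (lamK lam K j) _, ← hstep, one_div_div]
  have hIcc : Finset.Icc 1 (n-1) = Finset.Ico 1 n := by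
    rw [← Finset.Ico_add_one_right_eq_Icc]
    congr 1
    omega
  have hu0 : u0 lam mu K n = 1 + ∑ j ∈ Finset.Ico 1 n, P j := by
    rw [u0, hIcc]
    congr 1
    exact Finset.sum_congr rfl (fun j hj => hPid j (Finset.mem_Ico.1 hj).1)
  have hne1 : r1 - 1 ≠ 0 := sub_ne_zero.2 hr1ne
  have hne2 : (1:ℝ) - r1 ≠ 0 := h1r1.ne'
  have hgeo : 1/(1 - r1) = (∑ j ∈ Finset.range n, r1 ^ j) + r1 ^ n / (1 - r1) := by
    rw [geom_sum_eq hr1ne]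
    field_simp
    ring
  have h01 : ∑ j ∈ Finset.Ico 0 1, r1 ^ j = 1 := by
    rw [Finset.sum_Ico_eq_sum_range]
    simp
  have hrangesplit : ∑ j ∈ Finset.range n, r1 ^ j = 1 + ∑ j ∈ Finset.Ico 1 n, r1 ^ j := by
    rw [Finset.range_eq_Ico,
      ← Finset.sum_Ico_consecutive _ (Nat.zero_le 1) (by omega : 1 ≤ n), h01]
  have hdiff : u0 lam mu K n - 1/(1 - r1)
      = (∑ j ∈ Finset.Ico 1 n, (P j - r1 ^ j)) - r1 ^ n / (1 - r1) := by
    rw [hu0, hgeo, hrangesplit, Finset.sum_sub_distrib]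
    ring
  have hr1le : ∀ i : ℕ, 1 ≤ i → r1 ≤ mu ((i:ℝ)/K) / lam ((i:ℝ)/K) := by
    intro i hi
    apply hρmono _ _ hKinv.le
    gcongr
    exact_mod_cast hi
  have hPge : ∀ j ∈ Finset.Ico 1 n, r1 ^ j ≤ P j := by
    intro j hj
    have h1 : r1 ^ j = ∏ i ∈ Finset.Icc 1 j, r1 := by
      rw [Finset.prod_const, Nat.card_Icc, Nat.add_sub_cancel]
    rw [h1, hPapp]
    exact Finset.prod_le_prod (fun _ _ => hr1pos.le)
      (fun i hi => hr1le i (Finset.mem_Icc.1 hi).1)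
  have hA0 : 0 ≤ ∑ j ∈ Finset.Ico 1 n, (P j - r1 ^ j) :=
    Finset.sum_nonneg (fun j hj => by linarith [hPge j hj])
  have hB0 : 0 ≤ r1 ^ n / (1 - r1) := div_nonneg (pow_nonneg hr1pos.le _) h1r1.le
  rw [hmuK1, hdiff]
  have habs : |(∑ j ∈ Finset.Ico 1 n, (P j - r1 ^ j)) - r1 ^ n / (1 - r1)|
      ≤ (∑ j ∈ Finset.Ico 1 n, (P j - r1 ^ j)) + r1 ^ n / (1 - r1) :=
    abs_le.2 ⟨by linarith, by linarith⟩
  refine le_trans habs ?_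
  have hsplitA : ∑ j ∈ Finset.Ico 1 n, (P j - r1 ^ j)
      = (∑ j ∈ Finset.Ico 1 (m+1), (P j - r1 ^ j)) + ∑ j ∈ Finset.Ico (m+1) n, (P j - r1 ^ j) :=
    (Finset.sum_Ico_consecutive _ (by omega) hmn).symm
  -- Lipschitz bounds
  have hlip : ∀ a b : ℝ, 0 < a → a ≤ b →
      Real.log (mu b / lam b) - Real.log (mu a / lam a) ≤ M * (b - a) := by
    intro a b ha hab
    have hb : 0 < b := lt_of_lt_of_le ha hab
    have hmua := hSA.mu_pos a ha.le
    have hmub := hSA.mu_pos b hb.le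
    have hlama := hSA.lam_pos a ha.le
    have hlamb := hSA.lam_pos b hb.le
    rw [Real.log_div hmub.ne' hlamb.ne', Real.log_div hmua.ne' hlama.ne']
    have hlam : Real.log (lam a) ≤ Real.log (lam b) :=
      Real.log_le_log hlama (hSA.lam_mono (Set.mem_Ici.2 ha.le) (Set.mem_Ici.2 hb.le) hab)
    rcases hab.eq_or_lt with rfl | hab'
    · simp
    · have := log_mu_lip mu hSA.mu_pos hSA.mu_diff M hM₀ a b ha hab'
      linarith
  have hρlip : ∀ a b : ℝ, 0 < a → a ≤ b → b ≤ xs →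
      mu b / lam b - mu a / lam a ≤ C₁ * (b - a) := by
    intro a b ha hab hbxs
    have hb := lt_of_lt_of_le ha hab
    have hpa := hρpos a ha.le
    have hpb := hρpos b hb.le
    set Δ := Real.log (mu b / lam b) - Real.log (mu a / lam a) with hΔ
    have hΔ0 : 0 ≤ Δ := by
      have := hSA.logratio_mono (Set.mem_Ici.2 ha.le) (Set.mem_Ici.2 hb.le) hab
      simp only [hΔ]
      linarith
    have hΔM : Δ ≤ M * (b - a) := hlip a b ha hab
    have hexp : mu b / lam b = (mu a / lam a) * Real.exp Δ := by
      rw [hΔ, Real.exp_sub, Real.exp_log hpb, Real.exp_log hpa]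
      rw [mul_div_cancel₀ _ hpa.ne']
    have hra1 : mu a / lam a ≤ 1 := hρle1 a ha.le (hab.trans hbxs)
    have hE : Real.exp Δ - 1 ≤ Δ * Real.exp Δ := exp_sub_one_le_aux hΔ0
    have hΔxs : Δ ≤ M * xs := le_trans hΔM (mul_le_mul_of_nonneg_left (by linarith) hM0)
    have hEb : Real.exp Δ ≤ Real.exp (M * xs) := Real.exp_le_exp.2 hΔxs
    have hE1 : 0 ≤ Real.exp Δ - 1 := by linarith [Real.add_one_le_exp Δ]
    have h1 : mu b / lam b - mu a / lam a = (mu a / lam a) * (Real.exp Δ - 1) := by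
      rw [hexp]; ring
    rw [h1, hC₁def]
    calc (mu a / lam a) * (Real.exp Δ - 1) ≤ 1 * (Real.exp Δ - 1) :=
          mul_le_mul_of_nonneg_right hra1 hE1
      _ = Real.exp Δ - 1 := one_mul _
      _ ≤ Δ * Real.exp Δ := hE
      _ ≤ (M * (b - a)) * Real.exp (M * xs) :=
          mul_le_mul hΔM hEb (Real.exp_pos _).le (mul_nonneg hM0 (by linarith))
      _ = M * Real.exp (M * xs) * (b - a) := by ring
  have hmK : (m:ℝ)/K ≤ xs/2 := by
    rw [div_le_iff₀ hKpos]
    linarith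
  -- Bound on the first block
  have hterm1 : ∀ j ∈ Finset.Ico 1 (m+1),
      P j - r1 ^ j ≤ (C₁/K) * ((j:ℝ)^2 * Q^(j-1)) := by
    intro j hj
    obtain ⟨hj1, hjm⟩ := Finset.mem_Ico.1 hj
    have hjm' : j ≤ m := by omega
    have hbnd : ∀ i ∈ Finset.Icc 1 j,
        r1 ≤ mu ((i:ℝ)/K) / lam ((i:ℝ)/K) ∧ mu ((i:ℝ)/K) / lam ((i:ℝ)/K) ≤ Q := by
      intro i hi
      obtain ⟨hi1, hij⟩ := Finset.mem_Icc.1 hi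
      refine ⟨hr1le i hi1, ?_⟩
      apply hρmono _ _ (hidx i)
      calc (i:ℝ)/K ≤ (m:ℝ)/K := by
            gcongr
            exact_mod_cast (by omega : i ≤ m)
        _ ≤ xs/2 := hmK
    have h1 := prod_sub_pow_le _ r1 Q hr1pos.le hr1Q hQlt1.le j hbnd
    have hbound : ∀ i ∈ Finset.Icc 1 j,
        mu ((i:ℝ)/K) / lam ((i:ℝ)/K) - r1 ≤ C₁ * (j:ℝ) / K := by
      intro i hi
      obtain ⟨hi1, hij⟩ := Finset.mem_Icc.1 hi
      have hik : (1:ℝ)/K ≤ (i:ℝ)/K := by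
        gcongr
        exact_mod_cast hi1
      have himK : (i:ℝ)/K ≤ xs/2 := by
        calc (i:ℝ)/K ≤ (m:ℝ)/K := by
              gcongr
              exact_mod_cast (by omega : i ≤ m)
          _ ≤ xs/2 := hmK
      have hixs : (i:ℝ)/K ≤ xs := by linarith
      have hcast : (i:ℝ) ≤ (j:ℝ) := by exact_mod_cast hij
      calc mu ((i:ℝ)/K) / lam ((i:ℝ)/K) - r1 ≤ C₁ * ((i:ℝ)/K - 1/K) :=
            hρlip _ _ hKinv hik hixs
        _ ≤ C₁ * ((j:ℝ)/K) := by
            apply mul_le_mul_of_nonneg_left _ hC₁0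
            rw [div_sub_div_same]
            gcongr
            linarith
        _ = C₁ * (j:ℝ) / K := by ring
    have h2 := Finset.sum_le_card_nsmul (Finset.Icc 1 j) _ (C₁ * (j:ℝ) / K) hbound
    rw [Nat.card_Icc, Nat.add_sub_cancel, nsmul_eq_mul] at h2
    calc P j - r1 ^ j
        ≤ Q^(j-1) * ∑ i ∈ Finset.Icc 1 j, (mu ((i:ℝ)/K) / lam ((i:ℝ)/K) - r1) := by
          rw [hPapp j]; exact h1
      _ ≤ Q^(j-1) * ((j:ℝ) * (C₁ * (j:ℝ) / K)) :=
          mul_le_mul_of_nonneg_left h2 (pow_nonneg hQpos.le _)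
      _ = (C₁/K) * ((j:ℝ)^2 * Q^(j-1)) := by ring
  have hA1 : ∑ j ∈ Finset.Ico 1 (m+1), (P j - r1 ^ j) ≤ Ca / K := by
    have hstep2 : ∀ j ∈ Finset.Ico 1 (m+1),
        (C₁/K) * ((j:ℝ)^2 * Q^(j-1)) ≤ (C₁/K) * ((1/(1-φ))^2 * θ^(j-1)) := by
      intro j hj
      obtain ⟨hj1, _⟩ := Finset.mem_Ico.1 hj
      apply mul_le_mul_of_nonneg_left _ (by positivity)
      have hkey : ((j:ℝ)) * φ^(j-1) ≤ 1/(1-φ) := by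
        have h := geom_aux hφ0 hφ1 (j-1)
        rw [Nat.cast_sub hj1] at h
        push_cast at h
        calc ((j:ℝ)) * φ^(j-1) = ((j:ℝ) - 1 + 1) * φ^(j-1) := by ring
          _ ≤ 1/(1-φ) := h
      have hsq : ((j:ℝ))^2 * (φ^(j-1))^2 ≤ (1/(1-φ))^2 := by
        rw [← mul_pow]
        apply pow_le_pow_left₀ (by positivity) hkey
      have hexpand : (j:ℝ)^2 * Q^(j-1) = ((j:ℝ)^2 * (φ^(j-1))^2) * θ^(j-1) := by
        rw [← hθθ, ← hφφ]
        ring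
      rw [hexpand]
      exact mul_le_mul_of_nonneg_right hsq (pow_nonneg hθ0 _)
    have hsum1 : ∑ j ∈ Finset.Ico 1 (m+1), (P j - r1 ^ j)
        ≤ ∑ j ∈ Finset.Ico 1 (m+1), (C₁/K) * ((1/(1-φ))^2 * θ^(j-1)) :=
      Finset.sum_le_sum (fun j hj => le_trans (hterm1 j hj) (hstep2 j hj))
    have hsum2 : ∑ j ∈ Finset.Ico 1 (m+1), (C₁/K) * ((1/(1-φ))^2 * θ^(j-1))
        = (C₁/K) * (1/(1-φ))^2 * ∑ j ∈ Finset.Ico 1 (m+1), θ^(j-1) := by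
      rw [Finset.mul_sum]
      apply Finset.sum_congr rfl
      intro j _
      ring
    have hsum3 : ∑ j ∈ Finset.Ico 1 (m+1), θ^(j-1) ≤ 1/(1-θ) := by
      rw [Finset.sum_Ico_eq_sum_range]
      have : ∀ i ∈ Finset.range (m+1-1), θ^(1+i-1) = θ^i := by
        intro i _
        congr 1
        omega
      rw [Finset.sum_congr rfl this]
      exact sum_geom_le hθ0 hθ1 _
    calc ∑ j ∈ Finset.Ico 1 (m+1), (P j - r1 ^ j)
        ≤ (C₁/K) * (1/(1-φ))^2 * ∑ j ∈ Finset.Ico 1 (m+1), θ^(j-1) := by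
          rw [← hsum2]; exact hsum1
      _ ≤ (C₁/K) * (1/(1-φ))^2 * (1/(1-θ)) := by
          apply mul_le_mul_of_nonneg_left hsum3
          apply mul_nonneg (by positivity) (sq_nonneg _)
      _ = Ca / K := by rw [hCa]; ring
  -- second block
  have hKle : K ≤ 2*((m:ℝ)+1)/xs := by
    rw [le_div_iff₀ hxs]
    linarith
  have hnK2 : (n:ℝ) ≤ 2*((m:ℝ)+1) := by linarith
  have hA2 : ∑ j ∈ Finset.Ico (m+1) n, (P j - r1 ^ j) ≤ Cb / K := by
    have hPle : ∀ j ∈ Finset.Ico (m+1) n, P j - r1 ^ j ≤ Q^m := by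
      intro j hj
      obtain ⟨hjm, hjn⟩ := Finset.mem_Ico.1 hj
      have h0j : Finset.Icc 1 j = Finset.Ioc 0 j := by
        ext x
        simp [Finset.mem_Icc, Finset.mem_Ioc]
        omega
      have hsplit : P j = (∏ i ∈ Finset.Ioc 0 m, (mu ((i:ℝ)/K) / lam ((i:ℝ)/K))) *
          ∏ i ∈ Finset.Ioc m j, (mu ((i:ℝ)/K) / lam ((i:ℝ)/K)) := by
        rw [hPapp j, h0j,
          ← Finset.prod_Ioc_consecutive _ (Nat.zero_le m) (by omega : m ≤ j)]
      have h1 : ∏ i ∈ Finset.Ioc 0 m, (mu ((i:ℝ)/K) / lam ((i:ℝ)/K)) ≤ Q^m := by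
        have hc : Q^m = ∏ i ∈ Finset.Ioc 0 m, Q := by
          rw [Finset.prod_const, Nat.card_Ioc, Nat.sub_zero]
        rw [hc]
        apply Finset.prod_le_prod (fun i _ => (hρpos _ (hidx i)).le)
        intro i hi
        obtain ⟨hi0, him⟩ := Finset.mem_Ioc.1 hi
        apply hρmono _ _ (hidx i)
        calc (i:ℝ)/K ≤ (m:ℝ)/K := by
              gcongr <;> exact_mod_cast him
          _ ≤ xs/2 := hmK
      have h2 : ∏ i ∈ Finset.Ioc m j, (mu ((i:ℝ)/K) / lam ((i:ℝ)/K)) ≤ 1 := by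
        apply Finset.prod_le_one (fun i _ => (hρpos _ (hidx i)).le)
        intro i hi
        obtain ⟨hi0, hij⟩ := Finset.mem_Ioc.1 hi
        apply hρle1 _ (hidx i)
        rw [div_le_iff₀ hKpos]
        have : (i:ℝ) ≤ (n:ℝ) := by exact_mod_cast (by omega : i ≤ n)
        linarith
      have h3 : P j ≤ Q^m := by
        rw [hsplit]
        calc (∏ i ∈ Finset.Ioc 0 m, (mu ((i:ℝ)/K) / lam ((i:ℝ)/K))) *
            ∏ i ∈ Finset.Ioc m j, (mu ((i:ℝ)/K) / lam ((i:ℝ)/K))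
            ≤ Q^m * 1 := mul_le_mul h1 h2
              (Finset.prod_nonneg (fun i _ => (hρpos _ (hidx i)).le))
              (pow_nonneg hQpos.le _)
          _ = Q^m := mul_one _
      have h4 : 0 ≤ r1 ^ j := pow_nonneg hr1pos.le _
      linarith
    have hQm0 : 0 ≤ Q^m := pow_nonneg hQpos.le _
    have hsum := Finset.sum_le_card_nsmul (Finset.Ico (m+1) n) _ (Q^m) hPle
    rw [Nat.card_Ico, nsmul_eq_mul] at hsum
    have hcard : ((n - (m+1) : ℕ):ℝ) ≤ (n:ℝ) := by
      exact_mod_cast (by omega : n - (m+1) ≤ n)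
    have hsum2 : ∑ j ∈ Finset.Ico (m+1) n, (P j - r1 ^ j) ≤ (n:ℝ) * Q^m := by
      calc ∑ j ∈ Finset.Ico (m+1) n, (P j - r1 ^ j) ≤ ((n - (m+1) : ℕ):ℝ) * Q^m := hsum
        _ ≤ (n:ℝ) * Q^m := mul_le_mul_of_nonneg_right hcard hQm0
    rw [le_div_iff₀ hKpos]
    · calc (∑ j ∈ Finset.Ico (m+1) n, (P j - r1 ^ j)) * K ≤ ((n:ℝ) * Q^m) * K :=
            mul_le_mul_of_nonneg_right hsum2 hKpos.le
        _ = (n:ℝ) * K * Q^m := by ring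
        _ ≤ (2*((m:ℝ)+1)) * (2*((m:ℝ)+1)/xs) * Q^m := by
            apply mul_le_mul_of_nonneg_right _ hQm0
            exact mul_le_mul hnK2 hKle hKpos.le (by positivity)
        _ = (4/xs) * (((m:ℝ)+1)^2 * Q^m) := by
            field_simp
            ring
        _ ≤ (4/xs) * (1/(1-φ))^2 := by
            apply mul_le_mul_of_nonneg_left _ (by positivity)
            have hg : ((m:ℝ)+1) * φ^m ≤ 1/(1-φ) := geom_aux hφ0 hφ1 m
            have hsq : (((m:ℝ)+1) * φ^m)^2 ≤ (1/(1-φ))^2 :=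
              pow_le_pow_left₀ (by positivity) hg 2
            have hexpand : (((m:ℝ)+1))^2 * Q^m = ((((m:ℝ)+1) * φ^m)^2) * θ^m := by
              rw [← hθθ, ← hφφ]
              ring
            have hθm : θ^m ≤ 1 := pow_le_one₀ hθ0 hθ1.le
            rw [hexpand]
            calc ((((m:ℝ)+1) * φ^m)^2) * θ^m ≤ (1/(1-φ))^2 * 1 :=
                  mul_le_mul hsq hθm (pow_nonneg hθ0 _) (sq_nonneg _)
              _ = (1/(1-φ))^2 := mul_one _
        _ = Cb := by rw [hCb]
  -- tail bound
  have hB : r1 ^ n / (1 - r1) ≤ Cc / K := by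
    have h1 : r1^n ≤ Q^m := by
      calc r1^n ≤ Q^n := pow_le_pow_left₀ hr1pos.le hr1Q n
        _ ≤ Q^m := pow_le_pow_of_le_one hQpos.le hQlt1.le (by omega)
    have h2 : 1/(1-r1) ≤ 1/(1-Q) := by
      apply one_div_le_one_div_of_le hQ1'
      linarith
    have h4 : r1^n/(1-r1) ≤ Q^m * (1/(1-Q)) := by
      rw [div_eq_mul_one_div]
      exact mul_le_mul h1 h2 (div_nonneg zero_le_one h1r1.le) (pow_nonneg hQpos.le _)
    rw [le_div_iff₀ hKpos]
    have hQmθ : Q^m = θ^m * θ^m := by rw [← hθθ, mul_pow]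
    have hg : ((m:ℝ)+1) * θ^m ≤ 1/(1-θ) := geom_aux hθ0 hθ1 m
    have hθm : θ^m ≤ 1 := pow_le_one₀ hθ0 hθ1.le
    have hθm0 : 0 ≤ θ^m := pow_nonneg hθ0 _
    calc r1 ^ n / (1 - r1) * K ≤ (Q^m * (1/(1-Q))) * K :=
          mul_le_mul_of_nonneg_right h4 hKpos.le
      _ ≤ (Q^m * (1/(1-Q))) * (2*((m:ℝ)+1)/xs) := by
          apply mul_le_mul_of_nonneg_left hKle
          exact mul_nonneg (pow_nonneg hQpos.le _) hinvQ
      _ = (2/xs) * (((m:ℝ)+1) * θ^m) * θ^m * (1/(1-Q)) := by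
          rw [hQmθ]
          field_simp
      _ ≤ (2/xs) * (1/(1-θ)) * 1 * (1/(1-Q)) := by
          apply mul_le_mul_of_nonneg_right _ hinvQ
          have hfac : (2/xs) * (((m:ℝ)+1) * θ^m) ≤ (2/xs) * (1/(1-θ)) :=
            mul_le_mul_of_nonneg_left hg (by positivity)
          calc (2/xs) * (((m:ℝ)+1) * θ^m) * θ^m ≤ ((2/xs) * (1/(1-θ))) * 1 :=
                mul_le_mul hfac hθm hθm0 (mul_nonneg (by positivity) hinvθ)
            _ = (2/xs) * (1/(1-θ)) * 1 := rfl
      _ = Cc := by rw [hCc]; ring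
  rw [hsplitA]
  have hCsum : Ca/K + Cb/K + Cc/K ≤ (Ca+Cb+Cc+1)/K := by
    have h2 : (Ca+Cb+Cc)/K ≤ (Ca+Cb+Cc+1)/K := by
      rw [div_le_div_iff₀ hKpos hKpos]
      have h3 : Ca+Cb+Cc ≤ Ca+Cb+Cc+1 := by linarith
      exact mul_le_mul_of_nonneg_right h3 hKpos.le
    calc Ca/K + Cb/K + Cc/K = (Ca+Cb+Cc)/K := by ring
      _ ≤ _ := h2
  linarith [hA1, hA2, hB]
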